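/- Under the bounded odds-ratio assumption (1/Γ ≤ e(x)(1-e_η(x))/(e_η(x)(1-e(x))) ≤ Γ for all x with Γ ≥ 1), the pointwise density ratio of the reweighted treatment and control densities is bounded: 1/Γ² ≤ g_η(x|T=1)/g_η(x|T=0) ≤ Γ² for all x. -/

import Mathlib

open MeasureTheory Real

/-- Under the bounded odds-ratio assumption with constant `Γ ≥ 1`, the pointwise
density ratio of the reweighted treatment and control densities is bounded:
`1/Γ² ≤ gη(x|T=1)/gη(x|T=0) ≤ Γ²` for all `x`. -/
theorem pointwise_density_ratio_bound
    {𝒳 : Type*} [MeasurableSpace 𝒳] (μ : Measure 𝒳)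
    (p e eη f : 𝒳 → ℝ) (Γ : ℝ)
    (hp_pos : ∀ x, 0 < p x) (hp_int : Integrable p μ) (hp_one : ∫ x, p x ∂μ = 1)
    (he : ∀ x, 0 < e x ∧ e x < 1) (heη : ∀ x, 0 < eη x ∧ eη x < 1)
    (hf_pos : ∀ x, 0 < f x)
    (hΓ : 1 ≤ Γ)
    (hodds : ∀ x, 1 / Γ ≤ e x * (1 - eη x) / (eη x * (1 - e x)) ∧
                  e x * (1 - eη x) / (eη x * (1 - e x)) ≤ Γ)
    (Z1 Z0 : ℝ)
    (hZ1 : Z1 = ∫ x, f x * (e x * p x) / eη x ∂μ)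
    (hZ0 : Z0 = ∫ x, f x * ((1 - e x) * p x) / (1 - eη x) ∂μ)
    (hint1 : Integrable (fun x => f x * (e x * p x) / eη x) μ)
    (hint0 : Integrable (fun x => f x * ((1 - e x) * p x) / (1 - eη x)) μ)
    (hZ1_pos : 0 < Z1) (hZ0_pos : 0 < Z0)
    (g1 g0 : 𝒳 → ℝ)
    (hg1 : ∀ x, g1 x = f x * (e x * p x) / eη x / Z1)
    (hg0 : ∀ x, g0 x = f x * ((1 - e x) * p x) / (1 - eη x) / Z0) :
    ∀ x, 1 / Γ ^ 2 ≤ g1 x / g0 x ∧ g1 x / g0 x ≤ Γ ^ 2 := by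
  have hΓ0 : 0 < Γ := lt_of_lt_of_le one_pos hΓ
  -- pointwise positivity of A and B and the identity A = r * B
  have hApos : ∀ y, 0 < f y * (e y * p y) / eη y := fun y =>
    div_pos (mul_pos (hf_pos y) (mul_pos (he y).1 (hp_pos y))) (heη y).1
  have hBpos : ∀ y, 0 < f y * ((1 - e y) * p y) / (1 - eη y) := fun y =>
    div_pos (mul_pos (hf_pos y) (mul_pos (by linarith [(he y).2]) (hp_pos y)))
      (by linarith [(heη y).2])
  have hAB : ∀ y, f y * (e y * p y) / eη y =
      (e y * (1 - eη y) / (eη y * (1 - e y))) *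
        (f y * ((1 - e y) * p y) / (1 - eη y)) := by
    intro y
    have h1 : eη y ≠ 0 := ne_of_gt (heη y).1
    have h2 : (1 - eη y) ≠ 0 := by have := (heη y).2; intro h; linarith [h]
    have h3 : (1 - e y) ≠ 0 := by have := (he y).2; intro h; linarith [h]
    field_simp
  -- bounds on A vs B
  have hA_le : ∀ y, f y * (e y * p y) / eη y ≤
      Γ * (f y * ((1 - e y) * p y) / (1 - eη y)) := by
    intro y
    rw [hAB y]
    exact mul_le_mul_of_nonneg_right (hodds y).2 (le_of_lt (hBpos y))
  have hB_le : ∀ y, f y * ((1 - e y) * p y) / (1 - eη y) ≤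
      Γ * (f y * (e y * p y) / eη y) := by
    intro y
    have h := (hodds y).1
    have := mul_le_mul_of_nonneg_right h (le_of_lt (hBpos y))
    rw [← hAB y] at this
    have h2 := mul_le_mul_of_nonneg_left this (le_of_lt hΓ0)
    rwa [← mul_assoc, mul_one_div_cancel (ne_of_gt hΓ0), one_mul] at h2
  -- integral bounds
  have hZ1_le : Z1 ≤ Γ * Z0 := by
    rw [hZ1, hZ0, ← integral_const_mul]
    exact integral_mono hint1 (hint0.const_mul Γ) hA_le
  have hZ0_le : Z0 ≤ Γ * Z1 := by
    rw [hZ1, hZ0, ← integral_const_mul]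
    exact integral_mono hint0 (hint1.const_mul Γ) hB_le
  intro x
  have hg : g1 x / g0 x =
      (e x * (1 - eη x) / (eη x * (1 - e x))) * (Z0 / Z1) := by
    have hBne := ne_of_gt (hBpos x)
    rw [hg1 x, hg0 x, hAB x, div_div_div_comm, mul_div_assoc, div_self hBne,
      mul_one, div_div_eq_mul_div, mul_div_assoc]
  have hr := hodds x
  have hr_pos : 0 < e x * (1 - eη x) / (eη x * (1 - e x)) := by
    apply div_pos (mul_pos (he x).1 (by linarith [(heη x).2]))
      (mul_pos (heη x).1 (by linarith [(he x).2]))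
  have hratio_le : Z0 / Z1 ≤ Γ := by
    rw [div_le_iff₀ hZ1_pos]; linarith
  have hratio_ge : 1 / Γ ≤ Z0 / Z1 := by
    rw [div_le_div_iff₀ hΓ0 hZ1_pos]; linarith
  constructor
  · rw [hg]
    have : 1 / Γ ^ 2 = (1 / Γ) * (1 / Γ) := by ring
    rw [this]
    exact mul_le_mul hr.1 hratio_ge (by positivity) (le_of_lt hr_pos)
  · rw [hg]
    have : Γ ^ 2 = Γ * Γ := sq Γ
    rw [this]
    exact mul_le_mul hr.2 hratio_le (by positivity) (le_of_lt hΓ0)
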